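/- Let N ≥ 2, let U ⊆ ℝᴺ be open, and let d : U → ℝ be three times continuously differentiable with ‖∇d(x)‖ = 1 for all x ∈ U, so that the Hessian matrix H(x) = (∂_α∂_βd(x))_{αβ} satisfies H(x)·∇d(x) = 0. Define G : U → (N×N matrices) by G(x) := Id − 2d(x)·H(x) + 2d(x)²·H(x)². Then G(x) is invertible for every x ∈ U, and for every x ∈ U and every symmetric N×N real matrix S one has Σ_{α,β} S_{αβ}·( ∂_α∂_βd(x) − Σ_γ Γ(G)^γ_{αβ}(x)·∂_γd(x) ) = d(x)·Σ_{α,β} S_{αβ}·(H(x)²)_{αβ}, where Γ(G)^γ_{αβ} := (1/2) Σ_κ (G⁻¹)^{γκ}·(∂_βG_{ακ} + ∂_αG_{βκ} − ∂_κG_{αβ}). In other words, the symmetrized Hessian of d with respect to the extended metric G equals d·(D²d)². -/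

import Mathlib

/-- The partial derivative of `f : ℝᴺ → ℝ` at `x` in the `α`-th coordinate direction. -/
noncomputable def partialDeriv18 {N : ℕ} (f : EuclideanSpace ℝ (Fin N) → ℝ) (α : Fin N)
    (x : EuclideanSpace ℝ (Fin N)) : ℝ :=
  fderiv ℝ f x (EuclideanSpace.single α 1)

/-- The Christoffel symbols `Γ(G)^γ_{αβ} = (1/2)·Σ_κ (G⁻¹)^{γκ}(∂_β G_{ακ} + ∂_α G_{βκ} - ∂_κ G_{αβ})`
of a matrix-valued metric `G`. -/
noncomputable def christoffel18 {N : ℕ}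
    (G : EuclideanSpace ℝ (Fin N) → Matrix (Fin N) (Fin N) ℝ)
    (γ α β : Fin N) (x : EuclideanSpace ℝ (Fin N)) : ℝ :=
  (1 / 2) * ∑ κ, (G x)⁻¹ γ κ *
    (partialDeriv18 (fun y => G y α κ) β x + partialDeriv18 (fun y => G y β κ) α x
      - partialDeriv18 (fun y => G y α β) κ x)

namespace Aux18
variable {N : ℕ} {x : EuclideanSpace ℝ (Fin N)} {α : Fin N}

lemma pd_congr {f g : EuclideanSpace ℝ (Fin N) → ℝ} (h : f =ᶠ[nhds x] g) :
    partialDeriv18 f α x = partialDeriv18 g α x := by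
  unfold partialDeriv18; rw [Filter.EventuallyEq.fderiv_eq h]

lemma pd_const (c : ℝ) : partialDeriv18 (fun _ => c) α x = 0 := by
  simp [partialDeriv18]

lemma pd_add {f g : EuclideanSpace ℝ (Fin N) → ℝ} (hf : DifferentiableAt ℝ f x)
    (hg : DifferentiableAt ℝ g x) :
    partialDeriv18 (fun y => f y + g y) α x = partialDeriv18 f α x + partialDeriv18 g α x := by
  unfold partialDeriv18; rw [fderiv_fun_add hf hg]; rfl

lemma pd_sub {f g : EuclideanSpace ℝ (Fin N) → ℝ} (hf : DifferentiableAt ℝ f x)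
    (hg : DifferentiableAt ℝ g x) :
    partialDeriv18 (fun y => f y - g y) α x = partialDeriv18 f α x - partialDeriv18 g α x := by
  unfold partialDeriv18; rw [fderiv_fun_sub hf hg]; rfl

lemma pd_mul {f g : EuclideanSpace ℝ (Fin N) → ℝ} (hf : DifferentiableAt ℝ f x)
    (hg : DifferentiableAt ℝ g x) :
    partialDeriv18 (fun y => f y * g y) α x
      = partialDeriv18 f α x * g x + f x * partialDeriv18 g α x := by
  unfold partialDeriv18; rw [fderiv_fun_mul hf hg]; simp; ring

lemma pd_sum {ι : Type*} (s : Finset ι) (f : ι → EuclideanSpace ℝ (Fin N) → ℝ)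
    (hf : ∀ i ∈ s, DifferentiableAt ℝ (f i) x) :
    partialDeriv18 (fun y => ∑ i ∈ s, f i y) α x = ∑ i ∈ s, partialDeriv18 (f i) α x := by
  unfold partialDeriv18; rw [fderiv_fun_sum hf]; simp

lemma pd_zero_of_eventually_zero {f : EuclideanSpace ℝ (Fin N) → ℝ}
    {U : Set (EuclideanSpace ℝ (Fin N))}
    (hU : IsOpen U) (hx : x ∈ U) (h : ∀ y ∈ U, f y = 0) :
    partialDeriv18 f α x = 0 := by
  have : f =ᶠ[nhds x] (fun _ => (0:ℝ)) := Filter.eventually_of_mem (hU.mem_nhds hx) h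
  rw [pd_congr this, pd_const]

lemma contDiffAt_pd {f : EuclideanSpace ℝ (Fin N) → ℝ} {n m : ℕ}
    (hf : ContDiffAt ℝ n f x) (h : m + 1 ≤ n) (b : Fin N) :
    ContDiffAt ℝ m (fun y => partialDeriv18 f b y) x := by
  have h1 : ContDiffAt ℝ m (fderiv ℝ f) x := hf.fderiv_right (by exact_mod_cast h)
  exact h1.clm_apply contDiffAt_const

lemma pd_pd {f : EuclideanSpace ℝ (Fin N) → ℝ} (hf : ContDiffAt ℝ 2 f x) (a b : Fin N) :
    partialDeriv18 (fun y => partialDeriv18 f b y) a x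
      = fderiv ℝ (fderiv ℝ f) x (EuclideanSpace.single a 1) (EuclideanSpace.single b 1) := by
  have hdiff : DifferentiableAt ℝ (fderiv ℝ f) x :=
    (hf.fderiv_right (m := 1) (by norm_num)).differentiableAt one_ne_zero
  unfold partialDeriv18
  rw [fderiv_clm_apply hdiff (differentiableAt_const _)]
  simp

lemma pd_symm {f : EuclideanSpace ℝ (Fin N) → ℝ} (hf : ContDiffAt ℝ 2 f x) (a b : Fin N) :
    partialDeriv18 (fun y => partialDeriv18 f b y) a x
      = partialDeriv18 (fun y => partialDeriv18 f a y) b x := by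
  rw [pd_pd hf, pd_pd hf]
  exact (hf.isSymmSndFDerivAt (by norm_num)) _ _

end Aux18

open Matrix in
/-- For the extended metric `G = Id - 2d·D²d + 2d²·(D²d)²` built from a function `d`
satisfying the eikonal equation `‖∇d‖ = 1`, the matrix `G(x)` is invertible and the
symmetrized Hessian of `d` with respect to `G` equals `d·(D²d)²`. -/
theorem extended_metric_hessian_of_signed_distance
    {N : ℕ} (hN : 2 ≤ N)
    (U : Set (EuclideanSpace ℝ (Fin N))) (hU : IsOpen U)
    (d : EuclideanSpace ℝ (Fin N) → ℝ) (hd : ContDiffOn ℝ 3 d U)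
    (hgrad : ∀ x ∈ U,
      ‖((EuclideanSpace.equiv (Fin N) ℝ).symm fun α => partialDeriv18 d α x)‖ = 1)
    (H : EuclideanSpace ℝ (Fin N) → Matrix (Fin N) (Fin N) ℝ)
    (hH : ∀ x α β, H x α β = partialDeriv18 (fun y => partialDeriv18 d β y) α x)
    (hHgrad : ∀ x ∈ U, ∀ α : Fin N, ∑ β, H x α β * partialDeriv18 d β x = 0)
    (G : EuclideanSpace ℝ (Fin N) → Matrix (Fin N) (Fin N) ℝ)
    (hG : ∀ x, G x = (1 : Matrix (Fin N) (Fin N) ℝ)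
      - (2 * d x) • H x + (2 * d x ^ 2) • (H x * H x)) :
    ∀ x ∈ U,
      IsUnit (G x).det ∧
      ∀ S : Matrix (Fin N) (Fin N) ℝ, S.IsSymm →
        ∑ α, ∑ β, S α β *
            (partialDeriv18 (fun y => partialDeriv18 d β y) α x
              - ∑ γ, christoffel18 G γ α β x * partialDeriv18 d γ x)
          = d x * ∑ α, ∑ β, S α β * (H x * H x) α β := by
  intro x hx
  -- ## basic regularity facts
  have hd3 : ∀ y ∈ U, ContDiffAt ℝ 3 d y := fun y hy => (hd y hy).contDiffAt (hU.mem_nhds hy)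
  have hpf2 : ∀ y ∈ U, ∀ b : Fin N, ContDiffAt ℝ 2 (fun z => partialDeriv18 d b z) y :=
    fun y hy b => Aux18.contDiffAt_pd (hd3 y hy) (by norm_num) b
  have hHfun : ∀ a b : Fin N,
      (fun y => H y a b) = fun y => partialDeriv18 (fun z => partialDeriv18 d b z) a y := by
    intro a b; funext y; exact hH y a b
  have hHc1 : ∀ y ∈ U, ∀ a b : Fin N, ContDiffAt ℝ 1 (fun z => H z a b) y := by
    intro y hy a b; rw [hHfun a b]; exact Aux18.contDiffAt_pd (hpf2 y hy b) le_rfl a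
  have hHd : ∀ y ∈ U, ∀ a b : Fin N, DifferentiableAt ℝ (fun z => H z a b) y :=
    fun y hy a b => (hHc1 y hy a b).differentiableAt one_ne_zero
  have hpd : ∀ y ∈ U, ∀ b : Fin N, DifferentiableAt ℝ (fun z => partialDeriv18 d b z) y :=
    fun y hy b => (hpf2 y hy b).differentiableAt two_ne_zero
  have hdd : ∀ y ∈ U, DifferentiableAt ℝ d y :=
    fun y hy => (hd3 y hy).differentiableAt (by norm_num)
  have hdx' : DifferentiableAt ℝ d x := hdd x hx
  have hpdx : ∀ b : Fin N, DifferentiableAt ℝ (fun z => partialDeriv18 d b z) x := hpd x hx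
  have hHdx : ∀ a b : Fin N, DifferentiableAt ℝ (fun z => H z a b) x := hHd x hx
  have hHHfun : ∀ a b : Fin N,
      (fun y => (H y * H y) a b) = (fun y => ∑ μ, H y a μ * H y μ b) := by
    intro a b; funext y; rw [Matrix.mul_apply]
  have hHHdx : ∀ a b : Fin N, DifferentiableAt ℝ (fun y => (H y * H y) a b) x := by
    intro a b; rw [hHHfun a b]
    exact DifferentiableAt.fun_sum fun μ _ => (hHdx a μ).mul (hHdx μ b)
  -- ## symmetry of H on U
  have hHsymm : ∀ y ∈ U, ∀ a b : Fin N, H y a b = H y b a := by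
    intro y hy a b; rw [hH y a b, hH y b a]
    exact Aux18.pd_symm ((hd3 y hy).of_le (by norm_num)) a b
  -- third-derivative symmetry at x
  have hthird : ∀ a b c : Fin N,
      partialDeriv18 (fun y => H y a b) c x = partialDeriv18 (fun y => H y c b) a x := by
    intro a b c
    rw [hHfun a b, hHfun c b]
    exact Aux18.pd_symm (hpf2 x hx b) c a
  -- ## eikonal at x
  have heik : ∑ κ, partialDeriv18 d κ x * partialDeriv18 d κ x = 1 := by
    -- from the eikonal equation
    have h := hgrad x hx
    rw [EuclideanSpace.norm_eq] at h
    have h2 := congrArg (fun t : ℝ => t ^ 2) h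
    simp only [one_pow] at h2
    rw [Real.sq_sqrt (Finset.sum_nonneg fun i _ => sq_nonneg _)] at h2
    rw [← h2]
    refine Finset.sum_congr rfl fun κ _ => ?_
    have hentry : ((EuclideanSpace.equiv (Fin N) ℝ).symm fun α => partialDeriv18 d α x) κ
        = partialDeriv18 d κ x := rfl
    rw [hentry, Real.norm_eq_abs, sq_abs]
    ring
  have hHp : ∀ a : Fin N, ∑ κ, H x a κ * partialDeriv18 d κ x = 0 := hHgrad x hx
  have hHHp : ∀ a : Fin N, ∑ κ, (H x * H x) a κ * partialDeriv18 d κ x = 0 := by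
    intro a
    have step : ∑ κ, (H x * H x) a κ * partialDeriv18 d κ x
        = ∑ μ, H x a μ * ∑ κ, H x μ κ * partialDeriv18 d κ x := by
      simp only [Matrix.mul_apply, Finset.sum_mul, Finset.mul_sum, mul_assoc]
      rw [Finset.sum_comm]
    rw [step]
    simp [hHp]
  -- ## transpose facts
  have hHT : (H x)ᵀ = H x := Matrix.ext fun a b => hHsymm x hx b a
  have hHHT : (H x * H x)ᵀ = H x * H x := by rw [Matrix.transpose_mul, hHT]
  have hH3T : (H x * (H x * H x))ᵀ = H x * (H x * H x) := by
    rw [Matrix.transpose_mul, hHHT, hHT, Matrix.mul_assoc]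
  have hHHsymm : ∀ a b : Fin N, (H x * H x) b a = (H x * H x) a b := by
    intro a b
    conv_lhs => rw [← hHHT]
    rfl
  have hH3symm : ∀ a b : Fin N, (H x * (H x * H x)) b a = (H x * (H x * H x)) a b := by
    intro a b
    conv_lhs => rw [← hH3T]
    rfl
  have hGT : (G x)ᵀ = G x := by
    rw [hG x]
    rw [Matrix.transpose_add, Matrix.transpose_sub, Matrix.transpose_smul, Matrix.transpose_smul,
      Matrix.transpose_one, hHT, hHHT]
  -- ## positive definiteness / invertibility
  have hposdef : (G x).PosDef := by
    have hGAB : G x = ((1:Matrix (Fin N) (Fin N) ℝ) - d x • H x)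
        * ((1:Matrix (Fin N) (Fin N) ℝ) - d x • H x) + (d x • H x) * (d x • H x) := by
      rw [hG x]
      simp only [Matrix.smul_mul, Matrix.mul_smul, smul_smul, sub_mul, mul_sub, one_mul, mul_one]
      module
    set A := (1:Matrix (Fin N) (Fin N) ℝ) - d x • H x with hA
    set B := d x • H x with hB
    have hABone : A + B = 1 := by rw [hA, hB]; abel
    have hAT : Aᵀ = A := by
      rw [hA, Matrix.transpose_sub, Matrix.transpose_one, Matrix.transpose_smul, hHT]
    have hBT : Bᵀ = B := by rw [hB, Matrix.transpose_smul, hHT]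
    refine Matrix.posDef_iff_dotProduct_mulVec.mpr ⟨?_, ?_⟩
    · show (G x)ᴴ = G x
      ext a b
      rw [Matrix.conjTranspose_apply, star_trivial]
      have := congrFun (congrFun hGT a) b
      rwa [Matrix.transpose_apply] at this
    · intro v hv
      have hsv : star v = v := funext fun i => star_trivial _
      have hval : star v ⬝ᵥ (G x *ᵥ v)
          = (A *ᵥ v) ⬝ᵥ (A *ᵥ v) + (B *ᵥ v) ⬝ᵥ (B *ᵥ v) := by
        rw [hsv, hGAB, Matrix.add_mulVec, dotProduct_add,
          ← Matrix.mulVec_mulVec, ← Matrix.mulVec_mulVec,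
          Matrix.dotProduct_mulVec v A, Matrix.dotProduct_mulVec v B]
        conv_lhs => rw [← hAT, ← hBT]
        rw [Matrix.vecMul_transpose, Matrix.vecMul_transpose, hAT, hBT]
      rw [hval]
      have key : ∀ z : Fin N → ℝ, 0 ≤ z ⬝ᵥ z :=
        fun z => Finset.sum_nonneg fun i _ => mul_self_nonneg _
      have keypos : ∀ z : Fin N → ℝ, z ≠ 0 → 0 < z ⬝ᵥ z := by
        intro z hz
        rcases (key z).lt_or_eq with h' | h'
        · exact h'
        · exact absurd (dotProduct_self_eq_zero.mp h'.symm) hz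
      have hor : A *ᵥ v ≠ 0 ∨ B *ᵥ v ≠ 0 := by
        by_contra hc
        push_neg at hc
        apply hv
        have hv' : v = A *ᵥ v + B *ᵥ v := by
          rw [← Matrix.add_mulVec, hABone, Matrix.one_mulVec]
        rw [hv', hc.1, hc.2, add_zero]
      rcases hor with h' | h'
      · have h1 := keypos _ h'
        have h2 := key (B *ᵥ v)
        linarith
      · have h1 := keypos _ h'
        have h2 := key (A *ᵥ v)
        linarith
  have hdet : IsUnit (G x).det := isUnit_iff_ne_zero.mpr (ne_of_gt hposdef.det_pos)
  refine ⟨hdet, ?_⟩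
  -- ## the vector p and the inverse metric
  have hGp : ∀ a : Fin N, ∑ κ, G x a κ * partialDeriv18 d κ x = partialDeriv18 d a x := by
    intro a
    have step : ∑ κ, G x a κ * partialDeriv18 d κ x
        = (∑ κ, (if a = κ then (1:ℝ) else 0) * partialDeriv18 d κ x)
          - (2 * d x) * ∑ κ, H x a κ * partialDeriv18 d κ x
          + (2 * d x ^ 2) * ∑ κ, (H x * H x) a κ * partialDeriv18 d κ x := by
      rw [Finset.mul_sum, Finset.mul_sum, ← Finset.sum_sub_distrib, ← Finset.sum_add_distrib]
      refine Finset.sum_congr rfl fun κ _ => ?_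
      rw [hG x]
      simp only [Matrix.add_apply, Matrix.sub_apply, Matrix.smul_apply, Matrix.one_apply,
        smul_eq_mul]
      ring
    rw [step, hHp a, hHHp a]
    simp
  have hpGinv : ∀ κ : Fin N,
      ∑ γ, partialDeriv18 d γ x * (G x)⁻¹ γ κ = partialDeriv18 d κ x := by
    intro κ
    have hGv : G x *ᵥ (fun γ => partialDeriv18 d γ x) = fun γ => partialDeriv18 d γ x := by
      funext a
      show ∑ j, G x a j * partialDeriv18 d j x = partialDeriv18 d a x
      exact hGp a
    have hGinvv : (G x)⁻¹ *ᵥ (fun γ => partialDeriv18 d γ x)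
        = fun γ => partialDeriv18 d γ x := by
      conv_lhs => rw [← hGv]
      rw [Matrix.mulVec_mulVec, Matrix.nonsing_inv_mul _ hdet, Matrix.one_mulVec]
    have hsymInv : ∀ γ : Fin N, (G x)⁻¹ γ κ = (G x)⁻¹ κ γ := by
      intro γ
      have h1 : ((G x)⁻¹)ᵀ = (G x)⁻¹ := by rw [Matrix.transpose_nonsing_inv, hGT]
      have := congrFun (congrFun h1 κ) γ
      rwa [Matrix.transpose_apply] at this
    calc ∑ γ, partialDeriv18 d γ x * (G x)⁻¹ γ κ
        = ∑ γ, (G x)⁻¹ κ γ * partialDeriv18 d γ x := by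
          refine Finset.sum_congr rfl fun γ _ => ?_
          rw [hsymInv γ]; ring
      _ = partialDeriv18 d κ x := congrFun hGinvv κ
  -- ## derivative contractions
  -- DH a b c = ∂_c H_{ab}, DH2 a b c = ∂_c (H²)_{ab}
  have c1 : ∀ a b : Fin N,
      ∑ κ, partialDeriv18 d κ x * partialDeriv18 (fun y => H y a κ) b x
        = -((H x * H x) a b) := by
    intro a b
    have h0 : partialDeriv18 (fun y => ∑ κ, H y a κ * partialDeriv18 d κ y) b x = 0 :=
      Aux18.pd_zero_of_eventually_zero hU hx (fun y hy => hHgrad y hy a)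
    rw [Aux18.pd_sum Finset.univ _ (fun κ _ => (hHdx a κ).fun_mul (hpdx κ))] at h0
    have hterm : ∀ κ : Fin N, partialDeriv18 (fun y => H y a κ * partialDeriv18 d κ y) b x
        = partialDeriv18 (fun y => H y a κ) b x * partialDeriv18 d κ x + H x a κ * H x b κ := by
      intro κ
      rw [Aux18.pd_mul (hHdx a κ) (hpdx κ), ← hH x b κ]
    rw [Finset.sum_congr rfl (fun κ _ => hterm κ), Finset.sum_add_distrib] at h0
    have hsum2 : ∑ κ, H x a κ * H x b κ = (H x * H x) a b := by
      rw [Matrix.mul_apply]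
      exact Finset.sum_congr rfl fun κ _ => by rw [hHsymm x hx b κ]
    rw [hsum2] at h0
    have hcomm : ∑ κ, partialDeriv18 d κ x * partialDeriv18 (fun y => H y a κ) b x
        = ∑ κ, partialDeriv18 (fun y => H y a κ) b x * partialDeriv18 d κ x :=
      Finset.sum_congr rfl fun κ _ => mul_comm _ _
    rw [hcomm]
    linarith
  have c2 : ∀ a b : Fin N,
      ∑ κ, partialDeriv18 d κ x * partialDeriv18 (fun y => H y a b) κ x
        = -((H x * H x) a b) := by
    intro a b
    have hg0 : ∀ y ∈ U, ∑ κ, partialDeriv18 d κ y * H y κ b = 0 := by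
      intro y hy
      have hcg : ∑ κ, partialDeriv18 d κ y * H y κ b
          = ∑ κ, H y b κ * partialDeriv18 d κ y :=
        Finset.sum_congr rfl fun κ _ => by rw [hHsymm y hy κ b]; ring
      rw [hcg]
      exact hHgrad y hy b
    have h0 : partialDeriv18 (fun y => ∑ κ, partialDeriv18 d κ y * H y κ b) a x = 0 :=
      Aux18.pd_zero_of_eventually_zero hU hx hg0
    rw [Aux18.pd_sum Finset.univ _ (fun κ _ => (hpdx κ).fun_mul (hHdx κ b))] at h0
    have hterm : ∀ κ : Fin N, partialDeriv18 (fun y => partialDeriv18 d κ y * H y κ b) a x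
        = H x a κ * H x κ b
          + partialDeriv18 d κ x * partialDeriv18 (fun y => H y κ b) a x := by
      intro κ
      rw [Aux18.pd_mul (hpdx κ) (hHdx κ b), ← hH x a κ]
    rw [Finset.sum_congr rfl (fun κ _ => hterm κ), Finset.sum_add_distrib,
      ← Matrix.mul_apply] at h0
    have hsw : ∑ κ, partialDeriv18 d κ x * partialDeriv18 (fun y => H y a b) κ x
        = ∑ κ, partialDeriv18 d κ x * partialDeriv18 (fun y => H y κ b) a x :=
      Finset.sum_congr rfl fun κ _ => by rw [hthird a b κ]
    rw [hsw]
    linarith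
  have hDH2 : ∀ a b c : Fin N,
      partialDeriv18 (fun y => (H y * H y) a b) c x
        = ∑ μ, (partialDeriv18 (fun y => H y a μ) c x * H x μ b
            + H x a μ * partialDeriv18 (fun y => H y μ b) c x) := by
    intro a b c
    rw [hHHfun a b, Aux18.pd_sum Finset.univ _ (fun μ _ => (hHdx a μ).fun_mul (hHdx μ b))]
    exact Finset.sum_congr rfl fun μ _ => Aux18.pd_mul (hHdx a μ) (hHdx μ b)
  have c3 : ∀ a b : Fin N,
      ∑ κ, partialDeriv18 d κ x * partialDeriv18 (fun y => (H y * H y) a κ) b x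
        = -((H x * (H x * H x)) a b) := by
    intro a b
    calc ∑ κ, partialDeriv18 d κ x * partialDeriv18 (fun y => (H y * H y) a κ) b x
        = ∑ κ, ∑ μ, (partialDeriv18 (fun y => H y a μ) b x * (H x μ κ * partialDeriv18 d κ x)
            + H x a μ * (partialDeriv18 d κ x * partialDeriv18 (fun y => H y μ κ) b x)) := by
          refine Finset.sum_congr rfl fun κ _ => ?_
          rw [hDH2 a κ b, Finset.mul_sum]
          exact Finset.sum_congr rfl fun μ _ => by ring
      _ = (∑ μ, partialDeriv18 (fun y => H y a μ) b x * ∑ κ, H x μ κ * partialDeriv18 d κ x)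
            + ∑ μ, H x a μ
              * ∑ κ, partialDeriv18 d κ x * partialDeriv18 (fun y => H y μ κ) b x := by
          rw [Finset.sum_comm]
          simp only [Finset.sum_add_distrib, Finset.mul_sum]
      _ = 0 + ∑ μ, H x a μ * -((H x * H x) μ b) := by
          congr 1
          · refine Finset.sum_eq_zero fun μ _ => ?_
            rw [hHp μ, mul_zero]
          · exact Finset.sum_congr rfl fun μ _ => by rw [c1 μ b]
      _ = -((H x * (H x * H x)) a b) := by
          rw [zero_add, Matrix.mul_apply (M := H x) (N := H x * H x)]
          simp [mul_neg]
  have c4 : ∀ a b : Fin N,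
      ∑ κ, partialDeriv18 d κ x * partialDeriv18 (fun y => (H y * H y) a b) κ x
        = -(2 * (H x * (H x * H x)) a b) := by
    intro a b
    calc ∑ κ, partialDeriv18 d κ x * partialDeriv18 (fun y => (H y * H y) a b) κ x
        = ∑ κ, ∑ μ, ((partialDeriv18 d κ x * partialDeriv18 (fun y => H y a μ) κ x) * H x μ b
            + H x a μ * (partialDeriv18 d κ x * partialDeriv18 (fun y => H y μ b) κ x)) := by
          refine Finset.sum_congr rfl fun κ _ => ?_
          rw [hDH2 a b κ, Finset.mul_sum]
          exact Finset.sum_congr rfl fun μ _ => by ring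
      _ = (∑ μ, (∑ κ, partialDeriv18 d κ x * partialDeriv18 (fun y => H y a μ) κ x) * H x μ b)
            + ∑ μ, H x a μ
              * ∑ κ, partialDeriv18 d κ x * partialDeriv18 (fun y => H y μ b) κ x := by
          rw [Finset.sum_comm]
          simp only [Finset.sum_add_distrib, Finset.mul_sum, Finset.sum_mul]
      _ = (∑ μ, -((H x * H x) a μ) * H x μ b) + ∑ μ, H x a μ * -((H x * H x) μ b) := by
          congr 1
          · exact Finset.sum_congr rfl fun μ _ => by rw [c2 a μ]
          · exact Finset.sum_congr rfl fun μ _ => by rw [c2 μ b]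
      _ = -(2 * (H x * (H x * H x)) a b) := by
          have e1 : ∑ μ, (H x * H x) a μ * H x μ b = ((H x * H x) * H x) a b :=
            (Matrix.mul_apply).symm
          have e2 : ∑ μ, H x a μ * (H x * H x) μ b = (H x * (H x * H x)) a b :=
            (Matrix.mul_apply).symm
          have e3 : (H x * H x) * H x = H x * (H x * H x) := Matrix.mul_assoc _ _ _
          simp only [neg_mul, mul_neg, Finset.sum_neg_distrib]
          rw [e1, e2, e3]
          ring
  -- ## derivative of the metric
  have hDGeq : ∀ a b c : Fin N,
      partialDeriv18 (fun y => G y a b) c x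
        = -(2 * partialDeriv18 d c x * H x a b)
            - 2 * d x * partialDeriv18 (fun y => H y a b) c x
            + 4 * d x * partialDeriv18 d c x * (H x * H x) a b
            + 2 * d x ^ 2 * partialDeriv18 (fun y => (H y * H y) a b) c x := by
    intro a b c
    have hGfun : (fun y => G y a b)
        = fun y => (1:Matrix (Fin N) (Fin N) ℝ) a b - 2 * d y * H y a b
            + 2 * d y ^ 2 * (H y * H y) a b := by
      funext y
      rw [hG y]
      simp only [Matrix.add_apply, Matrix.sub_apply, Matrix.smul_apply, smul_eq_mul]
    have e1 : DifferentiableAt ℝ (fun y => 2 * d y) x := hdx'.const_mul 2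
    have e2 : DifferentiableAt ℝ (fun y => 2 * d y * H y a b) x := e1.mul (hHdx a b)
    have e3 : DifferentiableAt ℝ (fun y => 2 * d y ^ 2) x := (hdx'.pow 2).const_mul 2
    have e4 : DifferentiableAt ℝ (fun y => 2 * d y ^ 2 * (H y * H y) a b) x :=
      e3.mul (hHHdx a b)
    have hpd1 : partialDeriv18 (fun y => 2 * d y) c x = 2 * partialDeriv18 d c x := by
      rw [Aux18.pd_mul (differentiableAt_const 2) hdx', Aux18.pd_const]
      ring
    have hpdsq : partialDeriv18 (fun y => d y ^ 2) c x = 2 * d x * partialDeriv18 d c x := by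
      have hsq : (fun y => d y ^ 2) = fun y => d y * d y := by funext y; ring
      rw [hsq, Aux18.pd_mul hdx' hdx']
      ring
    have hpd2 : partialDeriv18 (fun y => 2 * d y ^ 2) c x
        = 4 * d x * partialDeriv18 d c x := by
      rw [Aux18.pd_mul (differentiableAt_const 2) (hdx'.fun_pow 2), Aux18.pd_const, hpdsq]
      ring
    rw [hGfun, Aux18.pd_add ((differentiableAt_const _).fun_sub e2) e4,
      Aux18.pd_sub (differentiableAt_const _) e2, Aux18.pd_const,
      Aux18.pd_mul e1 (hHdx a b), Aux18.pd_mul e3 (hHHdx a b), hpd1, hpd2]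
    ring
  have T1 : ∀ a b : Fin N,
      ∑ κ, partialDeriv18 d κ x * partialDeriv18 (fun y => G y a κ) b x
        = 2 * d x * (H x * H x) a b - 2 * d x ^ 2 * (H x * (H x * H x)) a b := by
    intro a b
    have expand : ∀ κ : Fin N,
        partialDeriv18 d κ x * partialDeriv18 (fun y => G y a κ) b x
          = (-2 * partialDeriv18 d b x) * (H x a κ * partialDeriv18 d κ x)
            + (-2 * d x) * (partialDeriv18 d κ x * partialDeriv18 (fun y => H y a κ) b x)
            + (4 * d x * partialDeriv18 d b x) * ((H x * H x) a κ * partialDeriv18 d κ x)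
            + (2 * d x ^ 2)
              * (partialDeriv18 d κ x * partialDeriv18 (fun y => (H y * H y) a κ) b x) := by
      intro κ
      rw [hDGeq a κ b]
      ring
    rw [Finset.sum_congr rfl fun κ _ => expand κ]
    simp only [Finset.sum_add_distrib, ← Finset.mul_sum]
    rw [hHp a, hHHp a, c1 a b, c3 a b]
    ring
  have T2 : ∀ a b : Fin N,
      ∑ κ, partialDeriv18 d κ x * partialDeriv18 (fun y => G y a b) κ x
        = -(2 * H x a b) + 6 * d x * (H x * H x) a b
            - 4 * d x ^ 2 * (H x * (H x * H x)) a b := by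
    intro a b
    have expand : ∀ κ : Fin N,
        partialDeriv18 d κ x * partialDeriv18 (fun y => G y a b) κ x
          = (-2 * H x a b) * (partialDeriv18 d κ x * partialDeriv18 d κ x)
            + (-2 * d x) * (partialDeriv18 d κ x * partialDeriv18 (fun y => H y a b) κ x)
            + (4 * d x * (H x * H x) a b) * (partialDeriv18 d κ x * partialDeriv18 d κ x)
            + (2 * d x ^ 2)
              * (partialDeriv18 d κ x * partialDeriv18 (fun y => (H y * H y) a b) κ x) := by
      intro κ
      rw [hDGeq a b κ]
      ring
    rw [Finset.sum_congr rfl fun κ _ => expand κ]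
    simp only [Finset.sum_add_distrib, ← Finset.mul_sum]
    rw [heik, c2 a b, c4 a b]
    ring
  -- ## Christoffel contraction
  have hCC : ∀ a b : Fin N,
      ∑ γ, christoffel18 G γ a b x * partialDeriv18 d γ x
        = H x a b - d x * (H x * H x) a b := by
    intro a b
    have h1 : ∑ γ, christoffel18 G γ a b x * partialDeriv18 d γ x
        = (1/2) * ∑ κ, (∑ γ, partialDeriv18 d γ x * (G x)⁻¹ γ κ)
            * (partialDeriv18 (fun y => G y a κ) b x + partialDeriv18 (fun y => G y b κ) a x
                - partialDeriv18 (fun y => G y a b) κ x) := by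
      unfold christoffel18
      simp only [Finset.mul_sum, Finset.sum_mul]
      rw [Finset.sum_comm]
      exact Finset.sum_congr rfl fun κ _ => Finset.sum_congr rfl fun γ _ => by ring
    rw [h1, Finset.sum_congr rfl fun κ (_ : κ ∈ Finset.univ) => by rw [hpGinv κ]]
    have h3 : ∑ κ, partialDeriv18 d κ x
        * (partialDeriv18 (fun y => G y a κ) b x + partialDeriv18 (fun y => G y b κ) a x
            - partialDeriv18 (fun y => G y a b) κ x)
        = (∑ κ, partialDeriv18 d κ x * partialDeriv18 (fun y => G y a κ) b x)
          + (∑ κ, partialDeriv18 d κ x * partialDeriv18 (fun y => G y b κ) a x)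
          - ∑ κ, partialDeriv18 d κ x * partialDeriv18 (fun y => G y a b) κ x := by
      simp only [mul_add, mul_sub, Finset.sum_add_distrib, Finset.sum_sub_distrib]
    rw [h3, T1 a b, T1 b a, T2 a b, hHHsymm a b, hH3symm a b]
    ring
  -- ## conclusion
  intro S _
  have hterm : ∀ a b : Fin N,
      partialDeriv18 (fun y => partialDeriv18 d b y) a x
          - ∑ γ, christoffel18 G γ a b x * partialDeriv18 d γ x
        = d x * (H x * H x) a b := by
    intro a b
    rw [← hH x a b, hCC a b]
    ring
  rw [Finset.mul_sum]
  refine Finset.sum_congr rfl fun a _ => ?_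
  rw [Finset.mul_sum]
  refine Finset.sum_congr rfl fun b _ => ?_
  rw [hterm a b]
  ring
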